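/- Let X ⊆ ℝⁿ be nonempty, closed, and convex, and let h : ℝⁿ → ℝ be differentiable. Let z, x : [0,∞) → ℝⁿ be differentiable curves with x(t) ∈ X and ∇h(x(t)) = z(t) for all t ≥ 0 (so x(t) = ∇h*(z(t))). Let S : X → ℝⁿ be σ-strongly monotone (σ > 0), Φ : X → ℝⁿ, α > 0, β ≥ 0, and let y : [0,∞) → X be a curve such that S(x(t)) − S(y(t)) − Φ(y(t)) ∈ N_X(y(t)) and ż(t) = α(S(y(t)) − S(x(t))) − βΦ(x(t)) for all t (the target mirror descent dynamics). Suppose x̄ ∈ X is variationally stable with respect to Φ and that t ↦ ⟨Φ(y(t)), y(t) − x̄⟩ and t ↦ ‖y(t) − x(t)‖² are locally integrable. Then for all 0 ≤ t₁ ≤ t₂: D_h(x̄, x(t₂)) ≤ D_h(x̄, x(t₁)) − ασ ∫_{t₁}^{t₂} ‖y(s) − x(s)‖² ds. In particular, t ↦ D_h(x̄, x(t)) is nonincreasing. -/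

import Mathlib

open scoped RealInnerProductSpace

/-- Along the target mirror descent dynamics
`ż(t) = α(S(y(t)) - S(x(t))) - βΦ(x(t))`, `x(t) = ∇h*(z(t))` (i.e. `∇h(x(t)) = z(t)`),
with `y(t)` the target point of `x(t)` and `x̄` variationally stable w.r.t. `Φ`, the
Bregman divergence `D_h(x̄, x(t))` satisfies, for all `0 ≤ t₁ ≤ t₂`,
`D_h(x̄, x(t₂)) ≤ D_h(x̄, x(t₁)) - ασ ∫_{t₁}^{t₂} ‖y(s) - x(s)‖² ds`;
in particular `t ↦ D_h(x̄, x(t))` is nonincreasing on `[0, ∞)`. -/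
theorem tmd_bregman_lyapunov_decrease
    (n : ℕ) (X : Set (EuclideanSpace ℝ (Fin n)))
    (hXne : X.Nonempty) (hXcl : IsClosed X) (hXcv : Convex ℝ X)
    (h : EuclideanSpace ℝ (Fin n) → ℝ)
    (gh : EuclideanSpace ℝ (Fin n) → EuclideanSpace ℝ (Fin n))
    (hgrad : ∀ w, HasGradientAt h (gh w) w)
    (z x y : ℝ → EuclideanSpace ℝ (Fin n))
    (z' x' : ℝ → EuclideanSpace ℝ (Fin n))
    (hz : ∀ t, 0 ≤ t → HasDerivAt z (z' t) t)
    (hx : ∀ t, 0 ≤ t → HasDerivAt x (x' t) t)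
    (hxX : ∀ t, 0 ≤ t → x t ∈ X)
    (hyX : ∀ t, 0 ≤ t → y t ∈ X)
    (hmirror : ∀ t, 0 ≤ t → gh (x t) = z t)
    (S Φ : EuclideanSpace ℝ (Fin n) → EuclideanSpace ℝ (Fin n))
    (σ : ℝ) (hσ : 0 < σ)
    (hS : ∀ a ∈ X, ∀ b ∈ X, σ * ‖a - b‖ ^ 2 ≤ ⟪S a - S b, a - b⟫)
    (α β : ℝ) (hα : 0 < α) (hβ : 0 ≤ β)
    (hNC : ∀ t, 0 ≤ t → ∀ u ∈ X, ⟪S (x t) - S (y t) - Φ (y t), u - y t⟫ ≤ 0)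
    (hdyn : ∀ t, 0 ≤ t → z' t = α • (S (y t) - S (x t)) - β • Φ (x t))
    (xbar : EuclideanSpace ℝ (Fin n)) (hxbar : xbar ∈ X)
    (hVS : ∀ w ∈ X, 0 ≤ ⟪Φ w, w - xbar⟫)
    (hint1 : ∀ t₁ t₂ : ℝ, IntervalIntegrable (fun s => ⟪Φ (y s), y s - xbar⟫)
      MeasureTheory.volume t₁ t₂)
    (hint2 : ∀ t₁ t₂ : ℝ, IntervalIntegrable (fun s => ‖y s - x s‖ ^ 2)
      MeasureTheory.volume t₁ t₂) :
    (∀ t₁ t₂ : ℝ, 0 ≤ t₁ → t₁ ≤ t₂ →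
      (h xbar - h (x t₂) - ⟪gh (x t₂), xbar - x t₂⟫) ≤
        (h xbar - h (x t₁) - ⟪gh (x t₁), xbar - x t₁⟫)
          - α * σ * ∫ s in t₁..t₂, ‖y s - x s‖ ^ 2) ∧
      AntitoneOn (fun t => h xbar - h (x t) - ⟪gh (x t), xbar - x t⟫) (Set.Ici 0) := by

  -- Lyapunov function written with `z`
  set V : ℝ → ℝ := fun t => h xbar - h (x t) - ⟪z t, xbar - x t⟫ with hV
  -- derivative of V
  have hVderiv : ∀ t, 0 ≤ t → HasDerivAt V (⟪z' t, x t - xbar⟫) t := by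
    intro t ht
    have h1 : HasDerivAt (fun s => h (x s)) (⟪gh (x t), x' t⟫) t := by
      have := ((hasGradientAt_iff_hasFDerivAt.mp (hgrad (x t))).comp_hasDerivAt t (hx t ht))
      exact this.congr_deriv (by simp)
    have h2 : HasDerivAt (fun s => ⟪z s, xbar - x s⟫)
        (⟪z t, -(x' t)⟫ + ⟪z' t, xbar - x t⟫) t := by
      have hc : HasDerivAt (fun s => xbar - x s) (-(x' t)) t := by
        exact ((hasDerivAt_const t xbar).sub (hx t ht)).congr_deriv (zero_sub _)
      exact HasDerivAt.inner ℝ (hz t ht) hc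
    have := ((hasDerivAt_const t (h xbar)).sub h1).sub h2
    have hm := hmirror t ht
    refine this.congr_deriv ?_
    rw [hm]
    simp [inner_sub_right, inner_neg_right, real_inner_comm (z t) (x' t)]
  -- bound on the derivative
  have hbound : ∀ t, 0 ≤ t →
      ⟪z' t, x t - xbar⟫ ≤ -(α * σ) * ‖y t - x t‖ ^ 2 - α * ⟪Φ (y t), y t - xbar⟫ := by
    intro t ht
    have hxt := hxX t ht
    have hyt := hyX t ht
    rw [hdyn t ht]
    have key : ⟪S (y t) - S (x t), x t - xbar⟫ ≤
        -(σ * ‖y t - x t‖ ^ 2) - ⟪Φ (y t), y t - xbar⟫ := by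
      have e1 : ⟪S (y t) - S (x t), x t - y t⟫ ≤ -(σ * ‖y t - x t‖ ^ 2) := by
        have := hS (y t) hyt (x t) hxt
        have h2 : ⟪S (y t) - S (x t), x t - y t⟫ = -⟪S (y t) - S (x t), y t - x t⟫ := by
          rw [← inner_neg_right]; congr 1; abel
        rw [h2]; linarith
      have e2 : ⟪S (y t) - S (x t), y t - xbar⟫ ≤ -⟪Φ (y t), y t - xbar⟫ := by
        have := hNC t ht xbar hxbar
        have h3 : ⟪S (x t) - S (y t) - Φ (y t), xbar - y t⟫ =
            ⟪S (y t) - S (x t), y t - xbar⟫ + ⟪Φ (y t), y t - xbar⟫ := by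
          rw [show (S (x t) - S (y t) - Φ (y t) : EuclideanSpace ℝ (Fin n))
              = -((S (y t) - S (x t)) + Φ (y t)) by abel]
          rw [show (xbar - y t : EuclideanSpace ℝ (Fin n)) = -(y t - xbar) by abel]
          rw [inner_neg_neg, inner_add_left]
        rw [h3] at this; linarith
      have h4 : (x t - xbar : EuclideanSpace ℝ (Fin n)) = (x t - y t) + (y t - xbar) := by abel
      rw [h4, inner_add_right]; linarith
    have hVSx : 0 ≤ ⟪Φ (x t), x t - xbar⟫ := hVS (x t) hxt
    rw [inner_sub_left, inner_smul_left, inner_smul_left]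
    simp only [RCLike.star_def, conj_trivial]
    nlinarith [mul_le_mul_of_nonneg_left key hα.le, mul_nonneg hβ hVSx]
  -- integral comparison on [t₁, t₂]
  have main : ∀ t₁ t₂ : ℝ, 0 ≤ t₁ → t₁ ≤ t₂ →
      V t₂ ≤ V t₁ - α * σ * ∫ s in t₁..t₂, ‖y s - x s‖ ^ 2 := by
    intro t₁ t₂ ht₁ h12
    set φ : ℝ → ℝ := fun s => -(α * σ) * ‖y s - x s‖ ^ 2 - α * ⟪Φ (y s), y s - xbar⟫ with hφ
    have hφint : IntervalIntegrable φ MeasureTheory.volume t₁ t₂ :=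
      (((hint2 t₁ t₂).const_mul _).sub ((hint1 t₁ t₂).const_mul _))
    have hsub : V t₂ - V t₁ ≤ ∫ s in t₁..t₂, φ s := by
      apply intervalIntegral.sub_le_integral_of_hasDeriv_right_of_le h12
      · intro s hs
        exact (hVderiv s (ht₁.trans hs.1)).continuousAt.continuousWithinAt
      · intro s hs
        exact (hVderiv s (ht₁.trans hs.1.le)).hasDerivWithinAt
      · exact (intervalIntegrable_iff_integrableOn_Icc_of_le h12).mp hφint
      · intro s hs
        exact hbound s (ht₁.trans hs.1.le)
    have hsplit : ∫ s in t₁..t₂, φ s =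
        -(α * σ) * (∫ s in t₁..t₂, ‖y s - x s‖ ^ 2)
          - α * ∫ s in t₁..t₂, ⟪Φ (y s), y s - xbar⟫ := by
      rw [hφ]
      rw [intervalIntegral.integral_sub ((hint2 t₁ t₂).const_mul _)
        ((hint1 t₁ t₂).const_mul _), intervalIntegral.integral_const_mul,
        intervalIntegral.integral_const_mul]
    have hnn : 0 ≤ ∫ s in t₁..t₂, ⟪Φ (y s), y s - xbar⟫ := by
      apply intervalIntegral.integral_nonneg h12
      intro s hs
      exact hVS (y s) (hyX s (ht₁.trans hs.1))
    rw [hsplit] at hsub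
    nlinarith
  constructor
  · intro t₁ t₂ ht₁ h12
    have := main t₁ t₂ ht₁ h12
    rw [hV] at this
    simpa only [hmirror t₁ ht₁, hmirror t₂ (ht₁.trans h12)] using this
  · intro t₁ ht₁ t₂ ht₂ h12
    have := main t₁ t₂ ht₁ h12
    rw [hV] at this
    simp only [hmirror t₁ ht₁, hmirror t₂ (ht₁.trans h12)] at this ⊢
    have hnn2 : 0 ≤ ∫ s in t₁..t₂, ‖y s - x s‖ ^ 2 := by
      apply intervalIntegral.integral_nonneg h12
      intro s _; positivity
    nlinarith [mul_nonneg (mul_nonneg hα.le hσ.le) hnn2]
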